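/- The norm of ℓ¹ (the space of absolutely summable real sequences) is extremely rough: for every u ∈ S_{ℓ¹}, limsup_{‖h‖→0} (‖u+h‖₁ + ‖u−h‖₁ − 2)/‖h‖₁ = 2. In particular, the norm of ℓ¹ is not Fréchet differentiable at any point. -/

import Mathlib

open Filter Metric

/-- The roughness `η(X, u)` of the norm of `X` at `u`:
`limsup_{‖h‖ → 0} (‖u + h‖ + ‖u - h‖ - 2) / ‖h‖`. -/
noncomputable def roughness {X : Type*} [NormedAddCommGroup X] (u : X) : ℝ :=
  Filter.limsup (fun h : X => (‖u + h‖ + ‖u - h‖ - 2) / ‖h‖) (nhdsWithin 0 {(0 : X)}ᶜ)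

local notation "ℓ₁" => lp (fun _ : ℕ => ℝ) 1

instance : Nontrivial ℓ₁ := by
  refine ⟨lp.single 1 0 (1:ℝ), 0, fun h => ?_⟩
  have h1 := lp.single_apply_self (E := fun _ : ℕ => ℝ) 1 0 (1:ℝ)
  rw [h] at h1
  simp at h1

lemma norm_eq_l1 (f : ℓ₁) : ‖f‖ = ∑' n, |f n| := by
  rw [lp.norm_eq_tsum_rpow (by norm_num) f]
  simp [Real.norm_eq_abs]

lemma summable_l1 (f : ℓ₁) : Summable (fun n => |f n|) := by
  have := (lp.memℓp f).summable (p := 1) (by norm_num)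
  simpa [Real.norm_eq_abs] using this

lemma single_apply' (n m : ℕ) (t : ℝ) :
    (lp.single (E := fun _ : ℕ => ℝ) 1 n t) m = if m = n then t else 0 := by
  rcases eq_or_ne m n with rfl | h
  · simp [lp.single_apply_self]
  · simp [lp.single_apply_ne _ _ _ h, h]

lemma norm_single' (n : ℕ) (t : ℝ) :
    ‖lp.single (E := fun _ : ℕ => ℝ) 1 n t‖ = |t| := by
  have := lp.norm_single (E := fun _ : ℕ => ℝ) (p := 1) (by norm_num) n t
  simpa using this

lemma key (u : ℓ₁) (n : ℕ) (t : ℝ) :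
    ‖u + lp.single 1 n t‖ + ‖u - lp.single 1 n t‖ - 2 * ‖u‖
      = |u n + t| + |u n - t| - 2 * |u n| := by
  set s : ℓ₁ := lp.single 1 n t with hs_def
  have hcoord : ∀ m, s m = if m = n then t else 0 := fun m => single_apply' n m t
  have h1 : ‖u + s‖ = |u n + t| + ∑' m, ite (m = n) 0 |u m| := by
    rw [norm_eq_l1, Summable.tsum_eq_add_tsum_ite (summable_l1 (u + s)) n]
    congr 1
    · simp [hcoord]
    · refine tsum_congr fun m => ?_
      rcases eq_or_ne m n with rfl | h
      · simp
      · simp [h, hcoord m]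
  have h2 : ‖u - s‖ = |u n - t| + ∑' m, ite (m = n) 0 |u m| := by
    rw [norm_eq_l1, Summable.tsum_eq_add_tsum_ite (summable_l1 (u - s)) n]
    congr 1
    · simp [hcoord]
    · refine tsum_congr fun m => ?_
      rcases eq_or_ne m n with rfl | h
      · simp
      · simp [h, hcoord m]
  have h3 : ‖u‖ = |u n| + ∑' m, ite (m = n) 0 |u m| := by
    rw [norm_eq_l1, Summable.tsum_eq_add_tsum_ite (summable_l1 u) n]
  rw [h1, h2, h3]; ring

lemma freq (u : ℓ₁) (hu : ‖u‖ = 1) {ε : ℝ} (hε : 0 < ε) :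
    ∃ᶠ h in nhdsWithin 0 {(0 : ℓ₁)}ᶜ,
      2 - ε ≤ (‖u + h‖ + ‖u - h‖ - 2) / ‖h‖ := by
  have hto : Tendsto (fun n => |u n|) atTop (nhds 0) := (summable_l1 u).tendsto_atTop_zero
  have hex : ∀ k : ℕ, ∃ n, |u n| < ε / 2 * (1 / (k + 1)) := by
    intro k
    have hpos : 0 < ε / 2 * (1 / ((k : ℝ) + 1)) := by positivity
    exact (hto.eventually (gt_mem_nhds hpos)).exists
  choose nn hnn using hex
  set h : ℕ → lp (fun _ : ℕ => ℝ) 1 := fun k => lp.single 1 (nn k) (1 / ((k : ℝ) + 1)) with hdef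
  have hnorm : ∀ k, ‖h k‖ = 1 / ((k : ℝ) + 1) := by
    intro k
    rw [hdef, norm_single', abs_of_pos (by positivity)]
  have htend : Tendsto h atTop (nhdsWithin 0 {(0 : ℓ₁)}ᶜ) := by
    rw [tendsto_nhdsWithin_iff]
    constructor
    · rw [tendsto_zero_iff_norm_tendsto_zero]
      simpa [hnorm] using tendsto_one_div_add_atTop_nhds_zero_nat (𝕜 := ℝ)
    · refine Eventually.of_forall fun k => ?_
      simp only [Set.mem_compl_iff, Set.mem_singleton_iff]
      intro h0
      have h1 := hnorm k
      rw [h0, norm_zero] at h1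
      have h2 : (0:ℝ) < 1 / ((k : ℝ) + 1) := by positivity
      linarith only [h1, h2]
  refine htend.frequently (Eventually.of_forall fun k => ?_).frequently
  have hk := key u (nn k) (1 / ((k : ℝ) + 1))
  rw [hu, mul_one] at hk
  have hun := hnn k
  simp only [hdef]
  set t : ℝ := 1 / ((k : ℝ) + 1) with ht
  have htpos : (0:ℝ) < t := by rw [ht]; positivity
  rw [norm_single', abs_of_pos htpos, le_div_iff₀ htpos, hk]
  set a : ℝ := u (nn k) with ha
  have habs : 2 * t ≤ |a + t| + |a - t| := by
    have h1 : |(a + t) - (a - t)| ≤ |a + t| + |a - t| := abs_sub _ _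
    have h2 : (a + t) - (a - t) = 2 * t := by ring
    rw [h2, abs_of_pos (by linarith only [htpos])] at h1
    exact h1
  have hun2 : 2 * |a| < ε * t := by
    have h3 : 2 * |a| < 2 * (ε / 2 * t) := (mul_lt_mul_iff_right₀ (by norm_num)).mpr hun
    calc 2 * |a| < 2 * (ε / 2 * t) := h3
    _ = ε * t := by ring
  linarith only [habs, hun2]

set_option maxHeartbeats 1000000 in
/-- The norm of `ℓ¹` is extremely rough; in particular it is nowhere Fréchet
differentiable on the unit sphere. -/
theorem stmt18 (u : lp (fun _ : ℕ => ℝ) 1) (hu : ‖u‖ = 1) :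
    roughness u = 2 ∧ ¬ DifferentiableAt ℝ (fun x : lp (fun _ : ℕ => ℝ) 1 => ‖x‖) u := by
  haveI : NeBot (nhdsWithin (0:ℓ₁) {(0:ℓ₁)}ᶜ) := Module.punctured_nhds_neBot ℝ _ 0
  have hub : ∀ᶠ h in nhdsWithin 0 {(0 : ℓ₁)}ᶜ, (‖u + h‖ + ‖u - h‖ - 2) / ‖h‖ ≤ 2 := by
    filter_upwards [self_mem_nhdsWithin] with h hh
    have h0 : h ≠ 0 := hh
    have hp : 0 < ‖h‖ := norm_pos_iff.mpr h0
    rw [div_le_iff₀ hp]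
    have h1 : ‖u + h‖ ≤ 1 + ‖h‖ := by simpa [hu] using norm_add_le u h
    have h2 : ‖u - h‖ ≤ 1 + ‖h‖ := by simpa [hu] using norm_sub_le u h
    linarith
  have hr : roughness u = 2 := by
    unfold roughness
    apply le_antisymm
    · exact limsup_le_of_le
        (Filter.IsCoboundedUnder.of_frequently_ge (freq u hu one_pos)) hub
    · refine le_of_forall_sub_le fun ε hε => ?_
      exact le_limsup_of_frequently_le (freq u hu hε) ⟨2, eventually_map.mpr hub⟩
  refine ⟨hr, fun hd => ?_⟩
  set f := fderiv ℝ (fun x : ℓ₁ => ‖x‖) u with hf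
  have hder := hd.hasFDerivAt
  rw [hasFDerivAt_iff_isLittleO_nhds_zero] at hder
  have hA : (fun h : ℓ₁ => ‖u + h‖ - ‖u‖ - f h) =o[nhds 0] fun h : ℓ₁ => ‖h‖ :=
    Asymptotics.isLittleO_norm_right.mpr hder
  have hB : (fun h : ℓ₁ => ‖u - h‖ - ‖u‖ - f (-h)) =o[nhds 0] fun h : ℓ₁ => ‖h‖ := by
    have hneg : Filter.Tendsto (fun h : ℓ₁ => -h) (nhds 0) (nhds (0:ℓ₁)) := by
      simpa using (continuous_neg.tendsto (0:ℓ₁))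
    have h2 := hA.comp_tendsto hneg
    refine h2.congr' (Eventually.of_forall fun h => ?_) (Eventually.of_forall fun h => ?_)
    · show ‖u + -h‖ - ‖u‖ - f (-h) = ‖u - h‖ - ‖u‖ - f (-h)
      rw [← sub_eq_add_neg]
    · show ‖-h‖ = ‖h‖
      exact norm_neg h
  have hC := hA.add hB
  have hC' : (fun h : ℓ₁ => ‖u + h‖ + ‖u - h‖ - 2) =o[nhds 0] fun h : ℓ₁ => ‖h‖ := by
    refine hC.congr' (Eventually.of_forall fun h => ?_) (Eventually.of_forall fun h => rfl)
    simp only [hu, map_neg]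
    ring
  have hT : Filter.Tendsto (fun h : ℓ₁ => (‖u + h‖ + ‖u - h‖ - 2) / ‖h‖)
      (nhds 0) (nhds 0) := hC'.tendsto_div_nhds_zero
  have h0 := (hT.mono_left (nhdsWithin_le_nhds (s := {(0:ℓ₁)}ᶜ))).limsup_eq
  have : (2:ℝ) = 0 := by rw [← hr]; unfold roughness; exact h0
  norm_num at this
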